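/- Let f ∈ ℝ[ω₁,…,ω_k] (each ωᵢ ∈ ℝ³) satisfy f(Aω₁,…,Aω_k) = f(ω₁,…,ω_k) for all A with A·Aᵀ = I and det A = 1. Then the polynomial g(ω₁,v₁,…,ω_k,v_k) := Σ_{i=1}^{k} ∇_{ωᵢ}f(ω₁,…,ω_k)·vᵢ is a k-fold invariant of the adjoint action of SE(3): for every A with A·Aᵀ = I, det A = 1, and every skew-symmetric T, g(Aω₁, TAω₁+Av₁, …, Aω_k, TAω_k+Av_k) = g(ω₁,v₁,…,ω_k,v_k); and likewise f itself, viewed as a polynomial in (ω₁,v₁,…,ω_k,v_k) depending only on the ωᵢ, is a k-fold invariant of this action. -/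

import Mathlib

open Matrix MvPolynomial

attribute [local instance] Matrix.linftyOpNormedRing Matrix.linftyOpNormedAlgebra
  Matrix.linftyOpNormedAddCommGroup

/-- Chain rule for evaluating a multivariate polynomial along differentiable paths. -/
lemma hasDerivAt_eval_comp {σ : Type*} [Fintype σ] [DecidableEq σ]
    (f : MvPolynomial σ ℝ) (c : σ → ℝ → ℝ) (c' : σ → ℝ) (t : ℝ)
    (hc : ∀ p, HasDerivAt (fun s => c p s) (c' p) t) :
    HasDerivAt (fun s => MvPolynomial.eval (fun p => c p s) f)
      (∑ p, MvPolynomial.eval (fun p => c p t) (MvPolynomial.pderiv p f) * c' p) t := by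
  induction f using MvPolynomial.induction_on with
  | C a => simpa using hasDerivAt_const t a
  | add p q hp hq =>
      have := hp.add hq
      simp only [map_add]
      exact this.congr_deriv (by simp [add_mul, Finset.sum_add_distrib])
  | mul_X p n ih =>
      have h := ih.mul (hc n)
      have key : (∑ q, MvPolynomial.eval (fun p => c p t)
            (MvPolynomial.pderiv q (p * MvPolynomial.X n)) * c' q)
          = (∑ q, MvPolynomial.eval (fun p => c p t) (MvPolynomial.pderiv q p) * c' q) * c n t
            + MvPolynomial.eval (fun p => c p t) p * c' n := by
        simp only [pderiv_mul, pderiv_X, map_add, _root_.map_mul, eval_X, add_mul,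
          Finset.sum_add_distrib, Finset.sum_mul]
        congr 1
        · apply Finset.sum_congr rfl; intro q _; ring
        · rw [Finset.sum_eq_single n]
          · simp
          · intro b _ hb
            simp [Pi.single_eq_of_ne (Ne.symm hb)]
          · simp
      rw [key]
      simp only [_root_.map_mul, eval_X]
      exact h

/-- Entries picking as a linear map on matrices, composed with `mulVec`. -/
private noncomputable def mvL (w : Fin 3 → ℝ) (r : Fin 3) :
    Matrix (Fin 3) (Fin 3) ℝ →ₗ[ℝ] ℝ where
  toFun M := M.mulVec w r
  map_add' M N := by simp [Matrix.add_mulVec]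
  map_smul' c M := by simp [Matrix.smul_mulVec]

private def entryL (i j : Fin 3) : Matrix (Fin 3) (Fin 3) ℝ →ₗ[ℝ] ℝ where
  toFun M := M i j
  map_add' _ _ := rfl
  map_smul' _ _ := rfl

private lemma hasDerivAt_exp_entry (T : Matrix (Fin 3) (Fin 3) ℝ) (w : Fin 3 → ℝ) (r : Fin 3)
    (t : ℝ) :
    HasDerivAt (fun s : ℝ => (NormedSpace.exp (s • T)).mulVec w r)
      ((NormedSpace.exp (t • T) * T).mulVec w r) t := by
  have h1 := hasDerivAt_exp_smul_const (𝕂 := ℝ) T t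
  have h2 := ((mvL w r).toContinuousLinearMap.hasFDerivAt).comp_hasDerivAt t h1
  exact h2

/-- `exp (s • T)` is in `SO(3)` when `T` is skew. -/
private lemma exp_skew_orth (T : Matrix (Fin 3) (Fin 3) ℝ) (hT : Tᵀ = -T) (s : ℝ) :
    NormedSpace.exp (s • T) * (NormedSpace.exp (s • T))ᵀ = 1 := by
  rw [← Matrix.exp_transpose, Matrix.transpose_smul, hT, smul_neg,
    ← Matrix.exp_add_of_commute _ _ (Commute.neg_right (Commute.refl (s • T)))]
  simp [NormedSpace.exp_zero]

private lemma exp_skew_det (T : Matrix (Fin 3) (Fin 3) ℝ) (hT : Tᵀ = -T) (s : ℝ) :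
    (NormedSpace.exp (s • T)).det = 1 := by
  set d : ℝ → ℝ := fun u => (NormedSpace.exp (u • T)).det with hd
  have hcont : Continuous d := by
    have hentry : ∀ i j : Fin 3, Continuous fun u : ℝ => (NormedSpace.exp (u • T)) i j := by
      intro i j
      have : ∀ u : ℝ, HasDerivAt (fun s : ℝ => (NormedSpace.exp (s • T)) i j)
          ((NormedSpace.exp (u • T) * T) i j) u := by
        intro u
        have h1 := hasDerivAt_exp_smul_const (𝕂 := ℝ) T u
        have h2 := ((entryL i j).toContinuousLinearMap.hasFDerivAt).comp_hasDerivAt u h1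
        exact h2
      exact continuous_iff_continuousAt.2 fun u => (this u).continuousAt
    have : Continuous fun u : ℝ => (NormedSpace.exp (u • T)) := by
      apply continuous_matrix
      intro i j; exact hentry i j
    simp only [hd, Matrix.det_apply]
    exact continuous_finset_sum _ fun σ _ => by
      exact (continuous_finset_prod _ fun i _ => (hentry (σ i) i)).const_smul _
  have hsq : ∀ u, d u = 1 ∨ d u = -1 := by
    intro u
    have h1 : d u * d u = 1 := by
      have := congrArg Matrix.det (exp_skew_orth T hT u)
      rwa [Matrix.det_mul, Matrix.det_transpose, Matrix.det_one] at this
    rcases mul_self_eq_one_iff.1 h1 with h | h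
    · exact Or.inl h
    · exact Or.inr h
  have h0 : d 0 = 1 := by simp [hd, NormedSpace.exp_zero]
  by_contra hne
  have hs : d s = -1 := (hsq s).resolve_left hne
  have : (0 : ℝ) ∈ Set.uIcc (d 0) (d s) := by
    rw [h0, hs]
    constructor <;> simp [min_le_iff, le_max_iff]
  obtain ⟨c, _, hc⟩ := intermediate_value_uIcc (hcont.continuousOn (s := Set.uIcc 0 s)) this
  rcases hsq c with h | h <;> rw [hc] at h <;> norm_num at h

/-- Infinitesimal invariance: the gradient pairing with an infinitesimal rotation vanishes. -/
private lemma infinitesimal {k : ℕ} (f : MvPolynomial (Fin k × Fin 3) ℝ)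
    (hf : ∀ A : Matrix (Fin 3) (Fin 3) ℝ, A * Aᵀ = 1 → A.det = 1 →
      ∀ ω : Fin k → Fin 3 → ℝ,
        MvPolynomial.eval (fun p => A.mulVec (ω p.1) p.2) f
          = MvPolynomial.eval (fun p => ω p.1 p.2) f)
    (T : Matrix (Fin 3) (Fin 3) ℝ) (hT : Tᵀ = -T) (x : Fin k → Fin 3 → ℝ) :
    ∑ p : Fin k × Fin 3,
      MvPolynomial.eval (fun q => x q.1 q.2) (MvPolynomial.pderiv p f)
        * T.mulVec (x p.1) p.2 = 0 := by
  have hderiv : HasDerivAt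
      (fun s : ℝ => MvPolynomial.eval (fun p => (NormedSpace.exp (s • T)).mulVec (x p.1) p.2) f)
      (∑ p : Fin k × Fin 3,
        MvPolynomial.eval (fun q => x q.1 q.2) (MvPolynomial.pderiv p f)
          * T.mulVec (x p.1) p.2) 0 := by
    have h := hasDerivAt_eval_comp f
      (fun p s => (NormedSpace.exp (s • T)).mulVec (x p.1) p.2)
      (fun p => T.mulVec (x p.1) p.2) 0
      (fun p => by
        have := hasDerivAt_exp_entry T (x p.1) p.2 0
        simpa [NormedSpace.exp_zero] using this)
    simpa [NormedSpace.exp_zero] using h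
  have hconst : (fun s : ℝ =>
      MvPolynomial.eval (fun p => (NormedSpace.exp (s • T)).mulVec (x p.1) p.2) f)
      = fun _ => MvPolynomial.eval (fun p => x p.1 p.2) f := by
    funext s
    exact hf _ (exp_skew_orth T hT s) (exp_skew_det T hT s) x
  rw [hconst] at hderiv
  exact hderiv.unique (hasDerivAt_const 0 _)

/-- Chain-rule invariance for the gradient pairing under `A ∈ SO(3)`. -/
private lemma gradpair {k : ℕ} (f : MvPolynomial (Fin k × Fin 3) ℝ)
    (hf : ∀ A : Matrix (Fin 3) (Fin 3) ℝ, A * Aᵀ = 1 → A.det = 1 →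
      ∀ ω : Fin k → Fin 3 → ℝ,
        MvPolynomial.eval (fun p => A.mulVec (ω p.1) p.2) f
          = MvPolynomial.eval (fun p => ω p.1 p.2) f)
    (A : Matrix (Fin 3) (Fin 3) ℝ) (hA : A * Aᵀ = 1) (hdet : A.det = 1)
    (ω v : Fin k → Fin 3 → ℝ) :
    ∑ p : Fin k × Fin 3,
      MvPolynomial.eval (fun q => A.mulVec (ω q.1) q.2) (MvPolynomial.pderiv p f)
        * A.mulVec (v p.1) p.2
    = ∑ p : Fin k × Fin 3,
        MvPolynomial.eval (fun q => ω q.1 q.2) (MvPolynomial.pderiv p f) * v p.1 p.2 := by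
  have hL : HasDerivAt
      (fun s : ℝ => MvPolynomial.eval
        (fun p => A.mulVec (ω p.1 + s • v p.1) p.2) f)
      (∑ p : Fin k × Fin 3,
        MvPolynomial.eval (fun q => A.mulVec (ω q.1) q.2) (MvPolynomial.pderiv p f)
          * A.mulVec (v p.1) p.2) 0 := by
    have h := hasDerivAt_eval_comp f
      (fun p s => A.mulVec (ω p.1 + s • v p.1) p.2)
      (fun p => A.mulVec (v p.1) p.2) 0
      (fun p => by
        have heq : (fun s : ℝ => A.mulVec (ω p.1 + s • v p.1) p.2)
            = fun s : ℝ => A.mulVec (ω p.1) p.2 + s * A.mulVec (v p.1) p.2 := by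
          funext s
          rw [Matrix.mulVec_add, Matrix.mulVec_smul]
          simp [smul_eq_mul]
        rw [heq]
        simpa using
          ((hasDerivAt_id (0:ℝ)).mul_const (A.mulVec (v p.1) p.2)))
    simpa using h
  have hR : HasDerivAt
      (fun s : ℝ => MvPolynomial.eval (fun p => (ω p.1 + s • v p.1) p.2) f)
      (∑ p : Fin k × Fin 3,
        MvPolynomial.eval (fun q => ω q.1 q.2) (MvPolynomial.pderiv p f) * v p.1 p.2) 0 := by
    have h := hasDerivAt_eval_comp f
      (fun p s => ω p.1 p.2 + s * v p.1 p.2)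
      (fun p => v p.1 p.2) 0
      (fun p => by
        simpa using
          ((hasDerivAt_id (0:ℝ)).mul_const (v p.1 p.2)))
    simpa using h
  have hfun : (fun s : ℝ => MvPolynomial.eval
        (fun p => A.mulVec (ω p.1 + s • v p.1) p.2) f)
      = fun s : ℝ => MvPolynomial.eval (fun p => (ω p.1 + s • v p.1) p.2) f := by
    funext s
    exact hf A hA hdet (fun i => ω i + s • v i)
  rw [hfun] at hL
  exact hL.unique hR

/-- `g(ω₁,v₁,…,ω_k,v_k) = Σᵢ ∇_{ωᵢ}f(ω₁,…,ω_k)·vᵢ`, the dual part of the dualisation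
of `f`, as a function of the `k` twists `(ωᵢ, vᵢ)`. -/
noncomputable def dualPart {k : ℕ} (f : MvPolynomial (Fin k × Fin 3) ℝ)
    (ω v : Fin k → Fin 3 → ℝ) : ℝ :=
  ∑ i : Fin k, ∑ r : Fin 3,
    MvPolynomial.eval (fun p => ω p.1 p.2) (MvPolynomial.pderiv (i, r) f) * v i r

lemma dualPart_eq {k : ℕ} (f : MvPolynomial (Fin k × Fin 3) ℝ) (ω v : Fin k → Fin 3 → ℝ) :
    dualPart f ω v = ∑ p : Fin k × Fin 3,
      MvPolynomial.eval (fun q => ω q.1 q.2) (MvPolynomial.pderiv p f) * v p.1 p.2 := by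
  rw [dualPart, Fintype.sum_prod_type]

/-- If `f` is a `k`-fold invariant of `SO(3)`, then both the primal part `f` itself and the
dual part `g(ω,v) = Σᵢ ∇_{ωᵢ}f·vᵢ` of its dualisation are `k`-fold invariants of the
adjoint action of `SE(3)`: `(ωᵢ, vᵢ) ↦ (Aωᵢ, TAωᵢ + Avᵢ)` with `A ∈ SO(3)`, `T` skew. -/
theorem primal_and_dual_parts_SE3_invariant {k : ℕ}
    (f : MvPolynomial (Fin k × Fin 3) ℝ)
    (hf : ∀ A : Matrix (Fin 3) (Fin 3) ℝ, A * Aᵀ = 1 → A.det = 1 →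
      ∀ ω : Fin k → Fin 3 → ℝ,
        MvPolynomial.eval (fun p => A.mulVec (ω p.1) p.2) f
          = MvPolynomial.eval (fun p => ω p.1 p.2) f) :
    ∀ (A T : Matrix (Fin 3) (Fin 3) ℝ), A * Aᵀ = 1 → A.det = 1 → Tᵀ = -T →
      ∀ ω v : Fin k → Fin 3 → ℝ,
        dualPart f (fun i => A.mulVec (ω i))
            (fun i => T.mulVec (A.mulVec (ω i)) + A.mulVec (v i))
          = dualPart f ω v ∧
        MvPolynomial.eval (fun p => A.mulVec (ω p.1) p.2) f
          = MvPolynomial.eval (fun p => ω p.1 p.2) f := by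
  intro A T hA hdet hT ω v
  refine ⟨?_, hf A hA hdet ω⟩
  rw [dualPart_eq, dualPart_eq]
  have hsplit : ∀ p : Fin k × Fin 3,
      MvPolynomial.eval (fun q => A.mulVec (ω q.1) q.2) (MvPolynomial.pderiv p f)
        * (T.mulVec (A.mulVec (ω p.1)) + A.mulVec (v p.1)) p.2
      = MvPolynomial.eval (fun q => A.mulVec (ω q.1) q.2) (MvPolynomial.pderiv p f)
          * T.mulVec (A.mulVec (ω p.1)) p.2
        + MvPolynomial.eval (fun q => A.mulVec (ω q.1) q.2) (MvPolynomial.pderiv p f)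
          * A.mulVec (v p.1) p.2 := by
    intro p; simp [Pi.add_apply, mul_add]
  simp only [hsplit, Finset.sum_add_distrib]
  rw [infinitesimal f hf T hT (fun i => A.mulVec (ω i)), gradpair f hf A hA hdet ω v, zero_add]
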